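/- Let 𝔲_s be the Lie algebra of strictly upper triangular (s+1)×(s+1) real matrices, let e_i = E_{i,i+1} for 1 ≤ i ≤ s, and for each permutation σ of {1,…,s} fixing 1, let m_σ be the left-normed bracket m_σ(X_1,…,X_s) = [ … [[X_1, X_{σ(2)}], X_{σ(3)}], …, X_{σ(s)}]. Then for any two permutations σ, τ of {1,…,s} fixing 1, m_σ(e_1, e_{τ(2)}, …, e_{τ(s)}) equals E_{1,s+1} if σ = τ⁻¹ and 0 otherwise. Consequently, the family of multilinear bracket maps (m_σ)_σ is linearly independent as maps 𝔲_s^s → 𝔲_s. -/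

import Mathlib

/-- A matrix is strictly upper triangular. -/
def IsStrictUpper {s : ℕ} (A : Matrix (Fin (s + 1)) (Fin (s + 1)) ℝ) : Prop :=
  ∀ i j : Fin (s + 1), (j : ℕ) ≤ (i : ℕ) → A i j = 0

/-- The elementary matrices `eᵢ = E_{i,i+1}`. -/
def elemUpper (s : ℕ) (i : Fin s) : Matrix (Fin (s + 1)) (Fin (s + 1)) ℝ :=
  Matrix.single i.castSucc i.succ 1

/-- The left-normed bracket `m_σ(X) = [⋯[[X_{σ(1)}, X_{σ(2)}], X_{σ(3)}], …, X_{σ(s)}]`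
(indices `0`-based, `σ` a permutation of `Fin s`). -/
def leftNormedBracket (s : ℕ) (hs : 0 < s)
    (X : Fin s → Matrix (Fin (s + 1)) (Fin (s + 1)) ℝ) (σ : Equiv.Perm (Fin s)) :
    Matrix (Fin (s + 1)) (Fin (s + 1)) ℝ :=
  ((List.finRange s).drop 1).foldl (fun acc j => ⁅acc, X (σ j)⁆) (X (σ ⟨0, hs⟩))

lemma bracket_step (s : ℕ) (m : Fin (s+1)) (a : Fin s) :
    ⁅(Matrix.single (0 : Fin (s+1)) m (1:ℝ)), elemUpper s a⁆ =
      if a.castSucc = m then Matrix.single 0 a.succ 1 else 0 := by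
  have h0 : a.succ ≠ (0 : Fin (s+1)) := by simp [Fin.ext_iff]
  rw [elemUpper, Ring.lie_def]
  rw [Matrix.single_mul_single_of_ne (c := 1) a.castSucc a.succ 0 h0 1]
  by_cases h : a.castSucc = m
  · subst h
    rw [Matrix.single_mul_single_same]
    simp
  · rw [Matrix.single_mul_single_of_ne (c := 1) 0 m a.castSucc (fun hh => h hh.symm) 1]
    simp [h]

lemma foldl_zero (s : ℕ) (l : List (Fin s)) (f : Fin s → Matrix (Fin (s+1)) (Fin (s+1)) ℝ) :
    l.foldl (fun acc j => ⁅acc, f j⁆) 0 = 0 := by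
  induction l with
  | nil => rfl
  | cons a t ih => simpa [Ring.lie_def] using ih

lemma aux (s : ℕ) (π : Equiv.Perm (Fin s)) :
    ∀ n k (h : k + n = s),
      ((List.finRange s).drop k).foldl (fun acc j => ⁅acc, elemUpper s (π j)⁆)
        (Matrix.single 0 ⟨k, by omega⟩ 1) =
      if ∀ j : Fin s, k ≤ (j : ℕ) → π j = j then Matrix.single 0 (Fin.last s) 1
        else 0 := by
  intro n
  induction n with
  | zero =>
    intro k h
    rw [List.drop_eq_nil_of_le (by simp; omega)]
    have : (∀ j : Fin s, k ≤ (j : ℕ) → π j = j) := fun j hj => absurd j.2 (by omega)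
    simp only [List.foldl_nil, if_pos this]
    have hks : k = s := by omega
    subst hks
    rfl
  | succ n ih =>
    intro k h
    have hk : k < s := by omega
    have hdrop : (List.finRange s).drop k =
        ⟨k, hk⟩ :: (List.finRange s).drop (k+1) := by
      rw [List.drop_eq_getElem_cons (by simpa using hk)]
      simp
    rw [hdrop, List.foldl_cons, bracket_step]
    by_cases hc : (π ⟨k, hk⟩).castSucc = ⟨k, by omega⟩
    · have hpk : π ⟨k, hk⟩ = ⟨k, hk⟩ := Fin.ext (by simpa [Fin.ext_iff] using hc)
      rw [if_pos hc]
      have hsucc : (π ⟨k, hk⟩).succ = (⟨k+1, by omega⟩ : Fin (s+1)) := by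
        simp [hpk, Fin.ext_iff]
      rw [hsucc, ih (k+1) (by omega)]
      refine if_congr ?_ rfl rfl
      constructor
      · intro hall j hj
        rcases Nat.eq_or_lt_of_le hj with he | hl
        · convert hpk <;> simp [Fin.ext_iff, ← he]
        · exact hall j hl
      · intro hall j hj
        exact hall j (by omega)
    · rw [if_neg hc, foldl_zero]
      have : ¬ (∀ j : Fin s, k ≤ (j : ℕ) → π j = j) := by
        intro hall
        exact hc (by simp [hall ⟨k, hk⟩ (le_refl k), Fin.ext_iff])
      rw [if_neg this]

lemma part1 (s : ℕ) (hs : 0 < s) (σ τ : Equiv.Perm (Fin s))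
    (hσ : σ ⟨0, hs⟩ = ⟨0, hs⟩) (hτ : τ ⟨0, hs⟩ = ⟨0, hs⟩) :
    leftNormedBracket s hs (fun i => elemUpper s (τ i)) σ =
      (if σ = τ⁻¹ then Matrix.single 0 (Fin.last s) 1 else 0) := by
  simp only [leftNormedBracket]
  have hstart : elemUpper s (τ (σ ⟨0, hs⟩)) =
      Matrix.single (0 : Fin (s+1)) ⟨1, by omega⟩ 1 := by
    rw [hσ, hτ, elemUpper]
    congr 1
  have key := aux s (τ * σ) (s - 1) 1 (by omega)
  simp only [Equiv.Perm.mul_apply] at key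
  rw [hstart, key]
  refine if_congr ?_ rfl rfl
  constructor
  · intro hall
    have h0 : τ (σ ⟨0, hs⟩) = ⟨0, hs⟩ := by rw [hσ, hτ]
    have hone : τ * σ = 1 := Equiv.ext fun j => by
      rcases Nat.eq_zero_or_pos (j : ℕ) with hj | hj
      · have : j = ⟨0, hs⟩ := Fin.ext hj
        subst this
        simpa using h0
      · simpa using hall j hj
    exact eq_inv_of_mul_eq_one_right hone
  · rintro rfl j hj
    simp

lemma elemUpper_strictUpper (s : ℕ) (i : Fin s) : IsStrictUpper (elemUpper s i) := by
  intro a b hab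
  simp only [elemUpper, Matrix.single, Matrix.of_apply, ite_eq_right_iff, one_ne_zero]
  rintro ⟨rfl, rfl⟩
  simp at hab

lemma E_ne_zero (s : ℕ) :
    (Matrix.single (0 : Fin (s+1)) (Fin.last s) (1:ℝ)) ≠ 0 := by
  intro h
  have := congrFun (congrFun h 0) (Fin.last s)
  simp [Matrix.single] at this

theorem leftNormed_eval_duality (s : ℕ) (hs : 0 < s) :
    (∀ σ τ : Equiv.Perm (Fin s), σ ⟨0, hs⟩ = ⟨0, hs⟩ → τ ⟨0, hs⟩ = ⟨0, hs⟩ →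
      leftNormedBracket s hs (fun i => elemUpper s (τ i)) σ =
        (if σ = τ⁻¹ then Matrix.single 0 (Fin.last s) 1 else 0)) ∧
    LinearIndependent ℝ
      (fun (σ : {σ : Equiv.Perm (Fin s) // σ ⟨0, hs⟩ = ⟨0, hs⟩}) =>
        (fun X : {X : Fin s → Matrix (Fin (s + 1)) (Fin (s + 1)) ℝ //
            ∀ i, IsStrictUpper (X i)} =>
          leftNormedBracket s hs X.1 σ.1)) := by
  refine ⟨fun σ τ hσ hτ => part1 s hs σ τ hσ hτ, ?_⟩
  rw [Fintype.linearIndependent_iff]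
  intro g hg σ₀
  have hτ0 : (σ₀.1⁻¹) ⟨0, hs⟩ = ⟨0, hs⟩ := by
    rw [Equiv.Perm.inv_eq_iff_eq]
    exact σ₀.2.symm
  set Xτ : {X : Fin s → Matrix (Fin (s + 1)) (Fin (s + 1)) ℝ // ∀ i, IsStrictUpper (X i)} :=
    ⟨fun i => elemUpper s (σ₀.1⁻¹ i), fun i => elemUpper_strictUpper s _⟩ with hXτ
  have := congrFun hg Xτ
  simp only [Finset.sum_apply, Pi.smul_apply, Pi.zero_apply] at this
  have hterm : ∀ σ : {σ : Equiv.Perm (Fin s) // σ ⟨0, hs⟩ = ⟨0, hs⟩},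
      leftNormedBracket s hs Xτ.1 σ.1 =
        if σ = σ₀ then Matrix.single 0 (Fin.last s) 1 else 0 := by
    intro σ
    rw [hXτ]
    rw [part1 s hs σ.1 σ₀.1⁻¹ σ.2 hτ0]
    refine if_congr ?_ rfl rfl
    rw [inv_inv]
    exact ⟨fun h => Subtype.ext h, fun h => congrArg Subtype.val h⟩
  simp only [hterm, smul_ite, smul_zero] at this
  rw [Finset.sum_ite_eq' Finset.univ σ₀
    (fun σ => g σ • Matrix.single 0 (Fin.last s) 1)] at this
  simp only [Finset.mem_univ, if_true] at this
  rcases smul_eq_zero.mp this with h | h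
  · exact h
  · exact absurd h (E_ne_zero s)
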